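/- arXiv:2102.10149 — 2 statements merged into one kernel-verified Lean document; each statement's English description precedes it below -/
import Mathlib

section
/- Let δ be an expansion function on L. Let p ∈ L be a nonzero proper element that is non-nilpotent (pⁿ ≠ 0 for every positive integer n) and satisfies the restricted cancellation law: for all a, c ∈ L, p·a = p·c ≠ 0 implies a = c. Let b ∈ L with p < b. Then b is φ_n-δ-primary to p for every integer n ≥ 2 if and only if b is δ-primary to p. -/
/-- A multiplicative lattice: a complete lattice with a commutative, associative
multiplication that distributes over arbitrary joins and whose greatest element `1`
is a multiplicative identity.  We also bundle the standing assumptions of the paper: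
`L` is compactly generated, `1` is compact, and products of compact elements are
compact. -/
class MultiplicativeLattice (L : Type*) extends CompleteLattice L, CommMonoid L where
  mul_sSup : ∀ (a : L) (s : Set L), a * sSup s = ⨆ x ∈ s, a * x
  one_eq_top : (1 : L) = ⊤
  compactly_generated : ∀ x : L, ∃ s : Set L,
    (∀ y ∈ s, IsCompactElement y) ∧ sSup s = x
  compact_one : IsCompactElement (1 : L)
  compact_mul : ∀ a b : L, IsCompactElement a →
    IsCompactElement b → IsCompactElement (a * b)

variable {L : Type*}

/-- An expansion function on `L`. -/
def IsExpansion [CompleteLattice L] (δ : L → L) : Prop :=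
  (∀ a, a ≤ δ a) ∧ ∀ a b : L, a ≤ b → δ a ≤ δ b

/-- A reduction function on `L`. -/
def IsReduction [CompleteLattice L] (φ : L → L) : Prop :=
  ∀ a, φ a ≤ a

/-- `b` is `φ`-`δ`-primary to `p`. -/
def PhiDeltaPrimaryTo [MultiplicativeLattice L] (φ δ : L → L) (b p : L) : Prop :=
  ∀ x : L, x * b ≤ p → ¬ x * b ≤ φ p → x ≤ δ p

/-- `b` is `δ`-primary to `p`. -/
def DeltaPrimaryTo [MultiplicativeLattice L] (δ : L → L) (b p : L) : Prop :=
  ∀ x : L, x * b ≤ p → x ≤ δ p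

/-- `b` is `φ`-prime to `p`. -/
def PhiPrimeTo [MultiplicativeLattice L] (φ : L → L) (b p : L) : Prop :=
  ∀ x : L, x * b ≤ p → ¬ x * b ≤ φ p → x ≤ p

/-- The radical `√q`: the join of all compact elements some positive power of which
lies below `q`.  This is the expansion function `δ₁`. -/
def mlRadical [MultiplicativeLattice L] (q : L) : L :=
  sSup {x : L | IsCompactElement x ∧ ∃ n : ℕ, 0 < n ∧ x ^ n ≤ q}

/-- The function `φ_ω(q) = ⋀_{n ≥ 1} qⁿ`. -/
def phiOmega [MultiplicativeLattice L] (q : L) : L := ⨅ n : ℕ, q ^ (n + 1)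

/-- The mlResidual `(a : c)`, the join of all `x` with `x * c ≤ a`. -/
def mlResidual [MultiplicativeLattice L] (a c : L) : L := sSup {x : L | x * c ≤ a}

lemma ml_mul_sup [MultiplicativeLattice L] (a x y : L) :
    a * (x ⊔ y) = a * x ⊔ a * y := by
  have h := MultiplicativeLattice.mul_sSup a {x, y}
  rw [sSup_pair] at h
  rw [h, iSup_pair]

lemma ml_mul_le_left [MultiplicativeLattice L] (a b : L) : a * b ≤ a := by
  have h : b ≤ (1 : L) := MultiplicativeLattice.one_eq_top (L := L) ▸ le_top
  calc a * b ≤ a * b ⊔ a * 1 := le_sup_left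
  _ = a * (b ⊔ 1) := (ml_mul_sup a b 1).symm
  _ = a := by rw [sup_eq_right.mpr h, mul_one]

theorem forall_phiN_deltaPrimary_iff_deltaPrimary [MultiplicativeLattice L]
    (δ : L → L) (hδ : IsExpansion δ)
    (p : L) (hp0 : p ≠ ⊥) (hp : p < 1)
    (hnonnil : ∀ n : ℕ, 0 < n → p ^ n ≠ ⊥)
    (hcanc : ∀ a c : L, p * a = p * c → p * a ≠ ⊥ → a = c)
    (b : L) (hpb : p < b) :
    (∀ n : ℕ, 2 ≤ n → PhiDeltaPrimaryTo (fun q => q ^ n) δ b p) ↔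
      DeltaPrimaryTo δ b p := by
  constructor
  · intro h x hxb
    have h2 := h 2 le_rfl
    have hpb' : p * b ≤ p := ml_mul_le_left p b
    have hsum : (x ⊔ p) * b ≤ p := by
      rw [mul_comm, ml_mul_sup]
      exact sup_le (mul_comm b x ▸ hxb) (mul_comm b p ▸ hpb')
    have hnot : ¬ (x ⊔ p) * b ≤ p ^ 2 := by
      intro hle
      have hpb2 : p * b ≤ p ^ 2 := by
        refine le_trans ?_ hle
        calc p * b = b * p := mul_comm _ _
        _ ≤ b * p ⊔ b * x := le_sup_left
        _ = b * (p ⊔ x) := (ml_mul_sup b p x).symm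
        _ = (x ⊔ p) * b := by rw [mul_comm, sup_comm]
      have hp2b : p ^ 2 ≤ p * b := by
        rw [sq]
        calc p * p = p * p ⊔ (p * b ⊓ p * p) := by simp
        _ ≤ p * p ⊔ p * b := by gcongr; exact inf_le_left
        _ = p * (p ⊔ b) := (ml_mul_sup p p b).symm
        _ = p * b := by rw [sup_eq_right.mpr hpb.le]
      have heq : p * b = p * p := le_antisymm (hpb2.trans (by rw [sq])) (sq p ▸ hp2b)
      have hne : p * b ≠ ⊥ := by
        rw [heq, ← sq]; exact hnonnil 2 (by norm_num)
      have := hcanc b p heq hne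
      exact hpb.ne' this
    have := h2 (x ⊔ p) hsum hnot
    exact le_trans le_sup_left this
  · intro h n hn x hxb _
    exact h x hxb
end

section
/- Let δ be an expansion function and φ a reduction function on L, let p ∈ L be a proper element, and let b ∈ L be φ-δ-primary to p. Let q ∈ L with q ≰ p (so that (p : q) is proper). If (φ(p) : q) ≤ φ((p : q)) and (δ(p) : q) ≤ δ((p : q)), then b is φ-δ-primary to (p : q). -/
variable {L : Type*}

lemma ml_mul_le_mul_left [MultiplicativeLattice L] {a b : L} (h : a ≤ b) (c : L) :
    c * a ≤ c * b := by
  have hb : sSup ({a, b} : Set L) = b := by simp [sSup_pair, h]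
  calc c * a ≤ ⨆ x ∈ ({a, b} : Set L), c * x := le_biSup _ (by simp)
    _ = c * sSup {a, b} := (MultiplicativeLattice.mul_sSup c _).symm
    _ = c * b := by rw [hb]

lemma le_mlResidual [MultiplicativeLattice L] {x a c : L} (h : x * c ≤ a) :
    x ≤ mlResidual a c := le_sSup h

lemma mlResidual_mul_le [MultiplicativeLattice L] (a c : L) :
    mlResidual a c * c ≤ a := by
  rw [mlResidual, mul_comm, MultiplicativeLattice.mul_sSup]
  exact iSup_le fun x => iSup_le fun hx => by rw [mul_comm]; exact hx

theorem phiDeltaPrimary_residual [MultiplicativeLattice L]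
    (δ φ : L → L) (hδ : IsExpansion δ) (hφ : IsReduction φ)
    (p : L) (hp : p < 1) (b : L)
    (h : PhiDeltaPrimaryTo φ δ b p) (q : L) (hq : ¬ q ≤ p)
    (h1 : mlResidual (φ p) q ≤ φ (mlResidual p q))
    (h2 : mlResidual (δ p) q ≤ δ (mlResidual p q)) :
    PhiDeltaPrimaryTo φ δ b (mlResidual p q) := by
  intro x hxb hxb'
  have hqp : x * b * q ≤ p := by
    calc x * b * q = q * (x * b) := by rw [mul_comm]
    _ ≤ q * mlResidual p q := ml_mul_le_mul_left hxb q
    _ = mlResidual p q * q := by rw [mul_comm]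
    _ ≤ p := mlResidual_mul_le p q
  have key : x * q * b ≤ p := by rw [mul_right_comm]; exact hqp
  by_cases hc : x * q * b ≤ φ p
  · exact absurd (le_trans (le_mlResidual (by rw [mul_right_comm]; exact hc)) h1) hxb'
  · exact le_trans (le_mlResidual (h (x * q) key hc)) h2
end
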